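/- Let M→N be a matroid perspective on a finite linearly ordered ground set E. Let B ⊆ E be independent in M and spanning in N, and let A ⊆ E satisfy B∖Int_N(B) ⊆ A ⊆ B∪Ext_M(B). Then r_M(A) − r_N(A) = r_M(B) − r_N(B). -/

import Mathlib

/-- A circuit of a matroid: a minimal dependent set. -/
def Matroid.IsCircuit' {α : Type*} (M : Matroid α) (C : Set α) : Prop :=
  M.Dep C ∧ ∀ D, M.Dep D → D ⊆ C → D = C

/-- A cocircuit of a matroid: a circuit of the dual matroid. -/
def Matroid.IsCocircuit' {α : Type*} (M : Matroid α) (C : Set α) : Prop :=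
  M✶.IsCircuit' C

/-- The rank of a set in a matroid: the largest cardinality of an independent subset. -/
noncomputable def Matroid.rk' {α : Type*} (M : Matroid α) (A : Set α) : ℕ :=
  sSup {n : ℕ | ∃ I, I ⊆ A ∧ M.Indep I ∧ I.ncard = n}

/-- `e` is the minimum element of the set `C`. -/
def IsMinOf {α : Type*} [LinearOrder α] (C : Set α) (e : α) : Prop :=
  e ∈ C ∧ ∀ x ∈ C, e ≤ x

/-- `Int_M(A)`: internally active elements of `A` w.r.t. `M`
(the ground set is the whole type, so `E ∖ A = Aᶜ`). -/
def IntSet {α : Type*} [LinearOrder α] (M : Matroid α) (A : Set α) : Set α :=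
  {e | e ∈ A ∧ ∃ C, M.IsCocircuit' C ∧ C ⊆ Aᶜ ∪ {e} ∧ IsMinOf C e}

/-- `Ext_M(A)`: externally active elements w.r.t. `M`. -/
def ExtSet {α : Type*} [LinearOrder α] (M : Matroid α) (A : Set α) : Set α :=
  {e | e ∉ A ∧ ∃ C, M.IsCircuit' C ∧ C ⊆ A ∪ {e} ∧ IsMinOf C e}

/-- `P_M(A)`: smallest elements of cocircuits of `M` contained in `E ∖ A`. -/
def PActSet {α : Type*} [LinearOrder α] (M : Matroid α) (A : Set α) : Set α :=
  {e | e ∉ A ∧ ∃ C, M.IsCocircuit' C ∧ C ⊆ Aᶜ ∧ IsMinOf C e}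

/-- `Q_M(A)`: smallest elements of circuits of `M` contained in `A`. -/
def QActSet {α : Type*} [LinearOrder α] (M : Matroid α) (A : Set α) : Set α :=
  {e | e ∈ A ∧ ∃ C, M.IsCircuit' C ∧ C ⊆ A ∧ IsMinOf C e}

section Aux

open Set

variable {α : Type*}

/-- Each proper subset of a circuit is independent. -/
lemma Matroid.IsCircuit'.diff_indep {M : Matroid α} (hE : M.E = Set.univ) {C : Set α}
    (hC : M.IsCircuit' C) {e : α} (he : e ∈ C) : M.Indep (C \ {e}) := by
  have hsub : C \ {e} ⊆ M.E := by rw [hE]; exact subset_univ _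
  rw [← Matroid.not_dep_iff hsub]
  intro hdep
  have heq := hC.2 _ hdep diff_subset
  have : e ∈ C \ {e} := by rw [heq]; exact he
  simp at this

/-- An element of a circuit lies in the closure of the rest of the circuit. -/
lemma Matroid.IsCircuit'.mem_closure {M : Matroid α} (hE : M.E = Set.univ) {C : Set α}
    (hC : M.IsCircuit' C) {e : α} (he : e ∈ C) : e ∈ M.closure (C \ {e}) := by
  have hI := hC.diff_indep hE he
  have hdep : M.Dep (insert e (C \ {e})) := by
    rw [Set.insert_diff_singleton, Set.insert_eq_of_mem he]
    exact hC.1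
  exact ((hI.insert_dep_iff).1 hdep).1

/-- An element of a cocircuit is not in the closure of the complement of the cocircuit. -/
lemma Matroid.IsCocircuit'.not_mem_closure_compl {N : Matroid α} (hE : N.E = Set.univ) {D : Set α}
    (hD : N.IsCocircuit' D) {e : α} (he : e ∈ D) : e ∉ N.closure Dᶜ := by
  intro hecl
  have hE' : N✶.E = Set.univ := by rw [Matroid.dual_ground, hE]
  have hIndep : N✶.Indep (D \ {e}) := hD.diff_indep hE' he
  have hspan : N.Spanning (N.E \ (D \ {e})) := Matroid.Coindep.compl_spanning hIndep
  have hset : N.E \ (D \ {e}) = insert e Dᶜ := by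
    rw [hE]; ext x
    by_cases hx : x = e <;> simp [hx, he]
  rw [hset] at hspan
  have h1 : N.closure (insert e Dᶜ) = N.E := hspan.closure_eq
  have h2 : N.closure Dᶜ = N.E := by
    rw [← Matroid.closure_insert_eq_of_mem_closure hecl, h1]
  have hcompl : Dᶜ ⊆ N.E := by rw [hE]; exact subset_univ _
  have hspan' : N.Spanning Dᶜ := by
    rw [Matroid.spanning_iff_closure_eq hcompl]; exact h2
  have hcoind : N.Coindep D := by
    rw [Matroid.coindep_iff_compl_spanning (by rw [hE]; exact subset_univ _)]
    rwa [hE, ← Set.compl_eq_univ_diff]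
  exact hD.1.1 hcoind

/-- A set containing its closure is a flat. -/
lemma flat_of_closure_subset {M : Matroid α} {F : Set α} (hFE : F ⊆ M.E)
    (h : M.closure F ⊆ F) : M.IsFlat F := by
  refine ⟨fun I X hIF hIX => ?_, hFE⟩
  have h1 : X ⊆ M.closure I := hIX.subset_closure
  rw [hIF.closure_eq_closure] at h1
  exact h1.trans h

/-- The complement of a cocircuit is a flat. -/
lemma Matroid.IsCocircuit'.compl_flat {N : Matroid α} (hE : N.E = Set.univ) {D : Set α}
    (hD : N.IsCocircuit' D) : N.IsFlat Dᶜ := by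
  refine flat_of_closure_subset (by rw [hE]; exact subset_univ _) ?_
  intro x hx
  by_contra hxD
  exact hD.not_mem_closure_compl hE (not_not.1 hxD) hx

/-- `rk'` of a set equals the cardinality of any basis of that set. -/
lemma rk'_eq_ncard_of_basis [Fintype α] {M : Matroid α} {I A : Set α}
    (h : M.IsBasis I A) : M.rk' A = I.ncard := by
  have hub : ∀ n ∈ {n : ℕ | ∃ J, J ⊆ A ∧ M.Indep J ∧ J.ncard = n}, n ≤ I.ncard := by
    rintro n ⟨J, hJA, hJ, rfl⟩
    by_contra hlt
    push_neg at hlt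
    have hlt' : I.encard < J.encard := by
      rw [← (Set.toFinite I).cast_ncard_eq, ← (Set.toFinite J).cast_ncard_eq]
      exact_mod_cast hlt
    obtain ⟨e, heJI, hins⟩ := h.indep.augment hJ hlt'
    have heq := h.eq_of_subset_indep hins (subset_insert _ _)
      (insert_subset (hJA heJI.1) h.subset)
    exact heJI.2 (by rw [heq]; exact mem_insert _ _)
  have hmem : I.ncard ∈ {n : ℕ | ∃ J, J ⊆ A ∧ M.Indep J ∧ J.ncard = n} :=
    ⟨I, h.subset, h.indep, rfl⟩
  exact le_antisymm (csSup_le ⟨_, hmem⟩ hub) (le_csSup ⟨I.ncard, hub⟩ hmem)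

/-- The closure of a set is a flat. -/
lemma closure_flat' {M : Matroid α} (X : Set α) : M.IsFlat (M.closure X) :=
  flat_of_closure_subset (M.closure_subset_ground X) (by rw [M.closure_closure])

end Aux

/-- For a matroid perspective `M → N`, a set `B` independent in `M` and spanning in `N`,
and `A` in the interval `[B ∖ Int_N(B), B ∪ Ext_M(B)]`, we have
`r_M(A) − r_N(A) = r_M(B) − r_N(B)`. -/
theorem stmt1 {α : Type*} [Fintype α] [LinearOrder α] (M N : Matroid α)
    (hME : M.E = Set.univ) (hNE : N.E = Set.univ)
    (hMN : ∀ F, N.IsFlat F → M.IsFlat F)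
    (B : Set α) (hBi : M.Indep B) (hBs : N.Spanning B)
    (A : Set α) (h1 : B \ IntSet N B ⊆ A) (h2 : A ⊆ B ∪ ExtSet M B) :
    (M.rk' A : ℤ) - (N.rk' A : ℤ) = (M.rk' B : ℤ) - (N.rk' B : ℤ) := by
  classical
  set X := B \ A with hX
  have hXInt : X ⊆ IntSet N B := by
    intro x hx
    by_contra hnot
    exact hx.2 (h1 ⟨hx.1, hnot⟩)
  -- every element of X is outside the N-closure of the rest of B
  have key1 : ∀ x ∈ X, x ∉ N.closure (B \ {x}) := by
    intro x hx hcl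
    obtain ⟨hxB, D, hD, hDsub, hmin⟩ := hXInt hx
    have hdisj : B \ {x} ⊆ Dᶜ := by
      intro b hb hbD
      rcases hDsub hbD with h' | h'
      · exact h' hb.1
      · exact hb.2 h'
    exact hD.not_mem_closure_compl hNE hmin.1 (N.closure_subset_closure hdisj hcl)
  -- every element of A \ B is in the M-closure of B ∩ A
  have key2 : ∀ a ∈ A \ B, a ∈ M.closure (B ∩ A) := by
    intro a ha
    have haExt : a ∈ ExtSet M B := by
      rcases h2 ha.1 with h | h
      · exact absurd h ha.2
      · exact h
    obtain ⟨haB, C, hC, hCsub, hmin⟩ := haExt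
    have hCBA : C \ {a} ⊆ B ∩ A := by
      intro c hc
      have hcB : c ∈ B := by
        rcases hCsub hc.1 with h | h
        · exact h
        · exact absurd h hc.2
      refine ⟨hcB, ?_⟩
      by_contra hcA
      have hcX : c ∈ X := ⟨hcB, hcA⟩
      obtain ⟨hcB', D, hD, hDsub, hminD⟩ := hXInt hcX
      by_cases haD : a ∈ D
      · have h1' : c ≤ a := hminD.2 a haD
        have h2' : a ≤ c := hmin.2 c hc.1
        have : a = c := le_antisymm h2' h1'
        exact haB (this ▸ hcB)
      · have hF : M.IsFlat Dᶜ := hMN _ (hD.compl_flat hNE)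
        have hCD : C \ {c} ⊆ Dᶜ := by
          intro t ht htD
          rcases hDsub htD with h' | h'
          · rcases hCsub ht.1 with hB' | hB'
            · exact h' hB'
            · exact haD (hB' ▸ htD)
          · exact ht.2 h'
        have hccl : c ∈ M.closure (C \ {c}) := hC.mem_closure hME hc.1
        have : c ∈ Dᶜ := by
          have h3 := M.closure_subset_closure hCD hccl
          rwa [hF.closure] at h3
        exact this hminD.1
    have haC : a ∈ M.closure (C \ {a}) := hC.mem_closure hME hmin.1
    exact M.closure_subset_closure hCBA haC
  -- M-basis of A
  have hBA_indep : M.Indep (B ∩ A) := hBi.subset Set.inter_subset_left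
  have hMbasisA : M.IsBasis (B ∩ A) A := by
    refine hBA_indep.isBasis_of_subset_of_subset_closure Set.inter_subset_right ?_
    intro a ha
    by_cases haB : a ∈ B
    · exact M.subset_closure (B ∩ A) (by rw [hME]; exact Set.subset_univ _) ⟨haB, ha⟩
    · exact key2 a ⟨ha, haB⟩
  -- an N-basis J of B ∩ A
  obtain ⟨J, hJ⟩ := N.exists_isBasis (B ∩ A) (by rw [hNE]; exact Set.subset_univ _)
  -- J is also an N-basis of A
  have hMN_cl : M.closure (B ∩ A) ⊆ N.closure (B ∩ A) := by
    have hFlatM : M.IsFlat (N.closure (B ∩ A)) := hMN _ (closure_flat' _)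
    have h4 : M.closure (B ∩ A) ⊆ M.closure (N.closure (B ∩ A)) :=
      M.closure_subset_closure (N.subset_closure _ (by rw [hNE]; exact Set.subset_univ _))
    rwa [hFlatM.closure] at h4
  have hNbasisA : N.IsBasis J A := by
    refine hJ.indep.isBasis_of_subset_of_subset_closure
      (hJ.subset.trans Set.inter_subset_right) ?_
    have h5 : A ⊆ N.closure (B ∩ A) := hMbasisA.subset_closure.trans hMN_cl
    rwa [← hJ.closure_eq_closure] at h5
  have hJB : J ⊆ B := hJ.subset.trans Set.inter_subset_left
  have hJA : J ⊆ A := hJ.subset.trans Set.inter_subset_right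
  have hJX_disj : Disjoint J X := Set.disjoint_left.2 fun t ht ht' => ht'.2 (hJA ht)
  -- J ∪ X is N-independent
  have hindepJX : N.Indep (J ∪ X) := by
    refine Set.Finite.induction_on_subset (motive := fun s _ => N.Indep (J ∪ s)) X (Set.toFinite X)
      (by simpa using hJ.indep) ?_
    intro a s haX hsX has hind
    rw [Set.union_insert]
    rw [Matroid.insert_indep_iff]
    refine ⟨hind, fun haJs => ⟨by rw [hNE]; exact Set.mem_univ _, ?_⟩⟩
    have hsub : J ∪ s ⊆ B \ {a} := by
      intro t ht
      rcases ht with ht | ht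
      · exact ⟨hJB ht, fun h => (haJs (by rw [h] at ht; exact Or.inl ht))⟩
      · exact ⟨(hsX ht).1, fun h => has (by rwa [← h])⟩
    exact fun hc => key1 a haX (N.closure_subset_closure hsub hc)
  -- J ∪ X is an N-basis of B
  have hNbasisB : N.IsBasis (J ∪ X) B := by
    refine hindepJX.isBasis_of_subset_of_subset_closure
      (Set.union_subset hJB Set.diff_subset) ?_
    intro b hb
    by_cases hbX : b ∈ X
    · exact N.subset_closure _ (by rw [hNE]; exact Set.subset_univ _) (Or.inr hbX)
    · have hbBA : b ∈ B ∩ A := ⟨hb, by_contra fun h => hbX ⟨hb, h⟩⟩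
      have h6 : b ∈ N.closure J := by
        rw [hJ.closure_eq_closure]
        exact N.subset_closure _ (by rw [hNE]; exact Set.subset_univ _) hbBA
      exact N.closure_subset_closure Set.subset_union_left h6
  -- rank computations
  have rMA : M.rk' A = (B ∩ A).ncard := rk'_eq_ncard_of_basis hMbasisA
  have rMB : M.rk' B = B.ncard := rk'_eq_ncard_of_basis hBi.isBasis_self
  have rNA : N.rk' A = J.ncard := rk'_eq_ncard_of_basis hNbasisA
  have rNB : N.rk' B = J.ncard + X.ncard := by
    rw [rk'_eq_ncard_of_basis hNbasisB,
      Set.ncard_union_eq hJX_disj (Set.toFinite _) (Set.toFinite _)]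
  have hcard : (B ∩ A).ncard + X.ncard = B.ncard :=
    Set.ncard_inter_add_ncard_diff_eq_ncard B A (Set.toFinite _)
  rw [rMA, rMB, rNA, rNB]
  omega
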